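/- Let H be a hypergraph and χ a proper partial L-coloring. Suppose v ∈ H_min, an edge of minimum size among the traces on V₀ of the classes H_i (i ∈ [k]), H₀ = ∅, for all nonempty classes |H_i| > 2c, at least two classes are nonempty, H is c-intersecting, and |H_min| ≤ log_ν m. Then there exists a vertex v ∈ V₀ and distinct indices i, j ∈ [k] with deg_{H_i}(v) > |H_i|/(2·log_ν m) and deg_{H_j}(v) ≥ 1. -/

import Mathlib

/-- Existence of a vertex of high degree in some class H_i and positive degree in
another class H_j, given H₀ = ∅, all nonempty classes of size > 2c, at least two
nonempty classes, and a trace edge of size at most log_ν m. -/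
theorem stmt17 {V : Type*} [Fintype V] [DecidableEq V] (k c : ℕ)
    (H : Finset (Finset V)) (χ : V → Option (Fin k)) (ν : ℝ)
    (hint : ∀ A ∈ H, (H.filter fun B => B ≠ A ∧ A ∩ B = ∅).card ≤ c)
    (hproper : ∀ A ∈ H, (∀ v ∈ A, χ v ≠ none) → ∃ u ∈ A, ∃ w ∈ A, χ u ≠ χ w)
    (hH0 : ∀ A ∈ H, A.image χ ≠ {none})
    (hbig : ∀ i : Fin k, (H.filter fun A => A.image χ = {none, some i}).Nonempty →
      2 * c < (H.filter fun A => A.image χ = {none, some i}).card)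
    (htwo : ∃ i j : Fin k, i ≠ j ∧
      (H.filter fun A => A.image χ = {none, some i}).Nonempty ∧
      (H.filter fun A => A.image χ = {none, some j}).Nonempty)
    (hmin : ∃ i : Fin k, ∃ A ∈ H, A.image χ = {none, some i} ∧
      (((A.filter fun v => χ v = none).card : ℝ) ≤ Real.logb ν (H.card : ℝ))) :
    ∃ v : V, χ v = none ∧ ∃ i j : Fin k, i ≠ j ∧
      ((H.filter fun A => A.image χ = {none, some i}).card : ℝ) /
          (2 * Real.logb ν (H.card : ℝ)) <
        ((H.filter fun A => A.image χ = {none, some i} ∧ v ∈ A).card : ℝ) ∧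
      1 ≤ (H.filter fun A => A.image χ = {none, some j} ∧ v ∈ A).card := by
  classical
  obtain ⟨j₀, A, hAH, hAim, hAL⟩ := hmin
  set L := Real.logb ν (H.card : ℝ) with hLdef
  set S := A.filter fun v => χ v = none with hSdef
  have hSmem : ∀ v ∈ S, v ∈ A ∧ χ v = none := by
    intro v hv
    simpa [hSdef] using Finset.mem_filter.mp hv
  have hSne : S.Nonempty := by
    have hn : none ∈ A.image χ := by rw [hAim]; simp
    obtain ⟨u, huA, hu⟩ := Finset.mem_image.mp hn
    exact ⟨u, Finset.mem_filter.mpr ⟨huA, hu⟩⟩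
  have hScard : (1 : ℝ) ≤ (S.card : ℝ) := by exact_mod_cast hSne.card_pos
  have hSL : (S.card : ℝ) ≤ L := hAL
  have hLpos : 0 < L := lt_of_lt_of_le one_pos (hScard.trans hSL)
  -- choose a nonempty class i ≠ j₀
  obtain ⟨i₁, i₂, hi12, h1, h2⟩ := htwo
  have hexists : ∃ i : Fin k, i ≠ j₀ ∧
      (H.filter fun B => Finset.image χ B = {none, some i}).Nonempty := by
    by_cases h : i₁ = j₀
    · exact ⟨i₂, by rw [← h]; exact hi12.symm, h2⟩
    · exact ⟨i₁, h, h1⟩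
  obtain ⟨i, hij, hine⟩ := hexists
  set Hi := H.filter fun B => B.image χ = {none, some i} with hHidef
  -- any common vertex of A and a class-i edge is in S
  have hkey : ∀ B ∈ Hi, ∀ u, u ∈ A → u ∈ B → u ∈ S := by
    intro B hB u huA huB
    obtain ⟨hBH, hBim⟩ := Finset.mem_filter.mp hB
    have hu1 : χ u ∈ ({none, some i} : Finset (Option (Fin k))) := by
      rw [← hBim]; exact Finset.mem_image_of_mem χ huB
    have hu2 : χ u ∈ ({none, some j₀} : Finset (Option (Fin k))) := by
      rw [← hAim]; exact Finset.mem_image_of_mem χ huA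
    simp only [Finset.mem_insert, Finset.mem_singleton] at hu1 hu2
    have hnone : χ u = none := by
      rcases hu1 with h | h
      · exact h
      · rcases hu2 with h' | h'
        · exact h'
        · exfalso; rw [h] at h'; exact hij (by injection h')
    exact Finset.mem_filter.mpr ⟨huA, hnone⟩
  set d : V → ℕ := fun v =>
    (H.filter fun B => B.image χ = {none, some i} ∧ v ∈ B).card with hddef
  have hdfilter : ∀ v, d v = (Hi.filter fun B => v ∈ B).card := by
    intro v; rw [hddef, hHidef, Finset.filter_filter]
  -- double counting
  have hsum : ∑ v ∈ S, d v = ∑ B ∈ Hi, (S.filter fun v => v ∈ B).card := by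
    simp only [hdfilter, Finset.card_filter]
    rw [Finset.sum_comm]
  -- edges of Hi disjoint from S are ≤ c
  have hdisj : (Hi.filter fun B => ¬ ∃ u ∈ S, u ∈ B).card ≤ c := by
    refine le_trans (Finset.card_le_card ?_) (hint A hAH)
    intro B hB
    obtain ⟨hB1, hB2⟩ := Finset.mem_filter.mp hB
    obtain ⟨hBH, hBim⟩ := Finset.mem_filter.mp hB1
    refine Finset.mem_filter.mpr ⟨hBH, ?_, ?_⟩
    · intro hEq
      have : some i ∈ ({none, some j₀} : Finset (Option (Fin k))) := by
        rw [← hAim, ← hEq, hBim]; simp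
      simp only [Finset.mem_insert, Finset.mem_singleton] at this
      rcases this with h | h
      · exact Option.some_ne_none i h
      · exact hij (by injection h)
    · rw [Finset.eq_empty_iff_forall_notMem]
      intro u hu
      obtain ⟨huA, huB⟩ := Finset.mem_inter.mp hu
      exact hB2 ⟨u, hkey B hB1 u huA huB, huB⟩
  -- edges of Hi meeting S are ≤ total deg sum
  have hmeet : (Hi.filter fun B => ∃ u ∈ S, u ∈ B).card ≤ ∑ v ∈ S, d v := by
    rw [hsum]
    calc (Hi.filter fun B => ∃ u ∈ S, u ∈ B).card
        = ∑ B ∈ Hi.filter fun B => ∃ u ∈ S, u ∈ B, 1 := by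
          rw [Finset.card_eq_sum_ones]
      _ ≤ ∑ B ∈ Hi.filter fun B => ∃ u ∈ S, u ∈ B, (S.filter fun v => v ∈ B).card := by
          refine Finset.sum_le_sum ?_
          intro B hB
          obtain ⟨_, u, huS, huB⟩ := Finset.mem_filter.mp hB
          exact Finset.card_pos.mpr ⟨u, Finset.mem_filter.mpr ⟨huS, huB⟩⟩
      _ ≤ ∑ B ∈ Hi, (S.filter fun v => v ∈ B).card :=
          Finset.sum_le_sum_of_subset (Finset.filter_subset _ _)
  have hsplit : (Hi.filter fun B => ∃ u ∈ S, u ∈ B).card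
      + (Hi.filter fun B => ¬ ∃ u ∈ S, u ∈ B).card = Hi.card :=
    Finset.card_filter_add_card_filter_not _
  have h2c : 2 * c < Hi.card := hbig i hine
  have hcard_lt : Hi.card < 2 * ∑ v ∈ S, d v := by omega
  -- averaging
  obtain ⟨v, hvS, hvavg⟩ : ∃ v ∈ S, ∑ w ∈ S, d w ≤ S.card * d v := by
    by_contra h
    push_neg at h
    have : ∑ v ∈ S, (S.card * d v) < ∑ _v ∈ S, ∑ w ∈ S, d w :=
      Finset.sum_lt_sum_of_nonempty hSne (fun v hv => h v hv)
    rw [← Finset.mul_sum, Finset.sum_const, smul_eq_mul] at this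
    exact lt_irrefl _ this
  obtain ⟨hvA, hvnone⟩ := hSmem v hvS
  refine ⟨v, hvnone, i, j₀, hij, ?_, ?_⟩
  · -- high degree in class i
    rw [div_lt_iff₀ (by positivity)]
    have c1 : (Hi.card : ℝ) < 2 * (∑ w ∈ S, d w : ℕ) := by exact_mod_cast hcard_lt
    have c2 : ((∑ w ∈ S, d w : ℕ) : ℝ) ≤ (S.card : ℝ) * (d v : ℝ) := by
      exact_mod_cast hvavg
    have c3 : (S.card : ℝ) * (d v : ℝ) ≤ L * (d v : ℝ) :=
      mul_le_mul_of_nonneg_right hSL (by positivity)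
    calc (Hi.card : ℝ) < 2 * (∑ w ∈ S, d w : ℕ) := c1
      _ ≤ 2 * ((S.card : ℝ) * (d v : ℝ)) := by linarith
      _ ≤ 2 * (L * (d v : ℝ)) := by linarith
      _ = (d v : ℝ) * (2 * L) := by ring
  · -- positive degree in class j₀
    refine Finset.card_pos.mpr ⟨A, Finset.mem_filter.mpr ⟨hAH, hAim, hvA⟩⟩
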